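/- Suppose the additive subgroup of ℝ generated by w_1, ..., w_N is dense in ℝ (the nonlattice case). Then the only complex number ω with Σ_{j=1}^N e^{−w_j ω} = 1 and Re ω = D is ω = D; that is, every complex dimension ω ≠ D satisfies Re ω < D. -/

import Mathlib

/-- Nonlattice case: if the additive group generated by the weights is dense in `ℝ`,
then `D` is the only complex dimension on the line `Re s = D`; that is, every complex
dimension `ω ≠ D` satisfies `Re ω < D`. -/
theorem nonlattice_unique_on_critical_line (N : ℕ) (hN : 2 ≤ N) (w : Fin N → ℝ)
    (hw : ∀ j, 0 < w j) (hmono : Monotone w)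
    (D : ℝ) (hD : ∑ j, Real.exp (-(w j) * D) = 1)
    (hdense : Dense ((AddSubgroup.closure (Set.range w) : AddSubgroup ℝ) : Set ℝ)) :
    (∀ ω : ℂ, ∑ j, Complex.exp (-(w j : ℂ) * ω) = 1 → ω.re = D → ω = (D : ℂ)) ∧
      ∀ ω : ℂ, ∑ j, Complex.exp (-(w j : ℂ) * ω) = 1 → ω ≠ (D : ℂ) → ω.re < D := by
  have key : ∀ ω : ℂ, ∑ j, Complex.exp (-(w j : ℂ) * ω) = 1 → ω.re = D → ω = (D : ℂ) := by
    intro ω hsum hre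
    set t := ω.im with ht
    -- real parts
    have hre' : ∑ j, Real.exp (-(w j) * D) * Real.cos (w j * t) = 1 := by
      have h := congrArg Complex.re hsum
      rw [Complex.re_sum] at h
      have : ∀ j : Fin N, (Complex.exp (-(w j : ℂ) * ω)).re
          = Real.exp (-(w j) * D) * Real.cos (w j * t) := by
        intro j
        rw [Complex.exp_re]
        have h1 : (-(w j : ℂ) * ω).re = -(w j) * D := by
          simp [Complex.mul_re, hre]
        have h2 : (-(w j : ℂ) * ω).im = -(w j * t) := by
          simp [Complex.mul_im, ht]
        rw [h1, h2, Real.cos_neg]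
      rw [Finset.sum_congr rfl fun j _ => this j] at h
      simpa using h
    have hzero : ∑ j, Real.exp (-(w j) * D) * (1 - Real.cos (w j * t)) = 0 := by
      have : ∑ j, Real.exp (-(w j) * D) * (1 - Real.cos (w j * t))
          = (∑ j, Real.exp (-(w j) * D)) - ∑ j, Real.exp (-(w j) * D) * Real.cos (w j * t) := by
        rw [← Finset.sum_sub_distrib]
        congr 1; ext j; ring
      rw [this, hD, hre']; ring
    have hcos : ∀ j : Fin N, Real.cos (w j * t) = 1 := by
      have hnn : ∀ j ∈ Finset.univ, (0:ℝ) ≤ Real.exp (-(w j) * D) * (1 - Real.cos (w j * t)) := by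
        intro j _
        have := Real.cos_le_one (w j * t)
        exact mul_nonneg (Real.exp_pos _).le (by linarith)
      have := (Finset.sum_eq_zero_iff_of_nonneg hnn).mp hzero
      intro j
      have hj := this j (Finset.mem_univ j)
      have := (Real.exp_pos (-(w j) * D)).ne'
      have h1 : 1 - Real.cos (w j * t) = 0 := by
        rcases mul_eq_zero.mp hj with h | h
        · exact absurd h this
        · exact h
      linarith
    by_cases htz : t = 0
    · apply Complex.ext
      · simpa using hre
      · simpa using htz
    · exfalso
      set a : ℝ := 2 * Real.pi / t with ha
      have haz : a ≠ 0 := by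
        have := Real.pi_pos
        simp [ha]
        exact htz
      have hrng : Set.range w ⊆ (AddSubgroup.zmultiples a : Set ℝ) := by
        rintro x ⟨j, rfl⟩
        obtain ⟨n, hn⟩ := (Real.cos_eq_one_iff (w j * t)).mp (hcos j)
        refine AddSubgroup.mem_zmultiples_iff.mpr ⟨n, ?_⟩
        rw [zsmul_eq_mul, ha]
        field_simp
        linarith [hn]
      have hle : (AddSubgroup.closure (Set.range w) : AddSubgroup ℝ) ≤ AddSubgroup.zmultiples a :=
        (AddSubgroup.closure_le _).mpr hrng
      have hopen : IsOpen (Set.Ioo (0:ℝ) |a|) := isOpen_Ioo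
      have hne : (Set.Ioo (0:ℝ) |a|).Nonempty := by
        refine ⟨|a|/2, ?_, ?_⟩ <;> [positivity; linarith [abs_pos.mpr haz]]
      obtain ⟨x, hx, hx0, hx1⟩ := hdense.exists_mem_open hopen hne
      have hxz : x ∈ AddSubgroup.zmultiples a := hle hx
      obtain ⟨m, hm⟩ := AddSubgroup.mem_zmultiples_iff.mp hxz
      rw [zsmul_eq_mul] at hm
      have hm0 : m ≠ 0 := by
        rintro rfl; simp at hm; rw [← hm] at hx0; exact lt_irrefl _ hx0
      have : |a| ≤ |x| := by
        rw [← hm, abs_mul]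
        have : (1:ℝ) ≤ |(m:ℝ)| := by
          rw [← Int.cast_abs]
          exact_mod_cast Int.one_le_abs (by simpa using hm0)
        nlinarith [abs_nonneg a]
      rw [abs_of_pos hx0] at this
      linarith
  refine ⟨key, ?_⟩
  intro ω hsum hne
  by_contra hlt
  push_neg at hlt
  rcases lt_or_eq_of_le hlt with h | h
  · -- D < Re ω : contradiction via triangle inequality
    have h1 : (1:ℝ) = ‖∑ j, Complex.exp (-(w j : ℂ) * ω)‖ := by
      rw [hsum]; simp
    have h2 : ‖∑ j, Complex.exp (-(w j : ℂ) * ω)‖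
        ≤ ∑ j, Real.exp (-(w j) * ω.re) := by
      refine le_trans (norm_sum_le _ _) ?_
      apply Finset.sum_le_sum
      intro j _
      rw [Complex.norm_exp]
      apply le_of_eq
      congr 1
      simp [Complex.mul_re]
    have h3 : ∑ j, Real.exp (-(w j) * ω.re) < ∑ j, Real.exp (-(w j) * D) := by
      apply Finset.sum_lt_sum_of_nonempty
      · exact Finset.univ_nonempty_iff.mpr ⟨⟨0, by omega⟩⟩
      · intro j _
        apply Real.exp_lt_exp.mpr
        have := hw j
        nlinarith
    rw [hD] at h3
    linarith [le_trans h1.le h2]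
  · exact hne (key ω hsum h.symm)
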